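/- For any integrable f : [0,1] → ℝ and any α ∈ (0,1), the following change-of-variables identity holds: ∫₀^α ∫_α^1 (v−u) f((α−u)/(v−u)) dv du = ((1−α)³/3)·∫₀^α f(x)/(1−x)³ dx + (α³/3)·∫_α^1 f(x)/x³ dx. -/

import Mathlib

open Set MeasureTheory intervalIntegral Filter Topology

noncomputable def Gaux (f : ℝ → ℝ) (y : ℝ) : ℝ := ∫ t in y..(1:ℝ), f t / t ^ 3

noncomputable def gaux (α u : ℝ) : ℝ := (α - u) / (1 - u)

lemma aux_hasDerivAt_g {α : ℝ} {u : ℝ} (hu : u ≠ 1) :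
    HasDerivAt (gaux α) ((α - 1) / (1 - u) ^ 2) u := by
  have h1 : (1:ℝ) - u ≠ 0 := sub_ne_zero.mpr (Ne.symm hu)
  have h := ((hasDerivAt_const u α).sub (hasDerivAt_id u)).div
      ((hasDerivAt_const u (1:ℝ)).sub (hasDerivAt_id u)) h1
  refine HasDerivAt.congr_deriv h ?_
  simp only [Pi.sub_apply, id]
  field_simp
  ring

lemma aux_hasDerivAt_G {f : ℝ → ℝ} (hf : ContinuousOn f (Set.Icc (0:ℝ) 1))
    {y : ℝ} (hy : y ∈ Set.Ioo (0:ℝ) 1) :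
    HasDerivAt (Gaux f) (-(f y / y ^ 3)) y := by
  have hcont : ContinuousOn (fun t => f t / t ^ 3) (Set.Icc y 1) := by
    apply ContinuousOn.div (hf.mono (Icc_subset_Icc hy.1.le le_rfl))
      (continuousOn_pow 3)
    intro t ht
    exact pow_ne_zero _ (lt_of_lt_of_le hy.1 ht.1).ne'
  have hint : IntervalIntegrable (fun t => f t / t ^ 3) volume y 1 :=
    (hcont.mono (by rw [uIcc_of_le hy.2.le])).intervalIntegrable
  have hmeas : StronglyMeasurableAtFilter (fun t => f t / t ^ 3) (nhds y) := by
    refine ⟨Set.Ioo 0 1, Ioo_mem_nhds hy.1 hy.2, ?_⟩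
    exact ((hf.mono Ioo_subset_Icc_self).div (continuousOn_pow 3)
      (fun t ht => pow_ne_zero _ ht.1.ne')).aestronglyMeasurable measurableSet_Ioo
  have hca : ContinuousAt (fun t => f t / t ^ 3) y := by
    apply ContinuousAt.div
    · exact hf.continuousAt (Icc_mem_nhds hy.1 hy.2)
    · exact (continuous_pow 3).continuousAt
    · exact pow_ne_zero _ hy.1.ne'
  exact intervalIntegral.integral_hasDerivAt_left hint hmeas hca

lemma aux_inner {f : ℝ → ℝ} (hf : ContinuousOn f (Set.Icc (0:ℝ) 1))
    {α : ℝ} (hα1 : α < 1) {u : ℝ} (hu : u ∈ Set.Ico (0:ℝ) α) :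
    (∫ v in α..(1:ℝ), (v - u) * f ((α - u) / (v - u)))
      = (α - u) ^ 2 * Gaux f (gaux α u) := by
  obtain ⟨hu0, huα⟩ := hu
  have hau : 0 < α - u := sub_pos.mpr huα
  have hu1 : 0 < 1 - u := sub_pos.mpr (huα.trans hα1)
  have hg0 : 0 < gaux α u := div_pos hau hu1
  set φ : ℝ → ℝ := fun v => (α - u) / (v - u) with hφ
  set φ' : ℝ → ℝ := fun v => -((α - u) / (v - u) ^ 2) with hφ'
  set h : ℝ → ℝ := fun x => -((α - u) ^ 2 * (f x / x ^ 3)) with hh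
  have hvu : ∀ v ∈ Set.uIcc α 1, 0 < v - u := by
    intro v hv
    rw [uIcc_of_le hα1.le] at hv
    exact lt_of_lt_of_le hau (by linarith [hv.1])
  have hderiv : ∀ v ∈ Set.uIcc α 1, HasDerivAt φ (φ' v) v := by
    intro v hv
    have hne : v - u ≠ 0 := (hvu v hv).ne'
    have hd := (hasDerivAt_const v (α - u)).div
      ((hasDerivAt_id v).sub_const u) hne
    refine HasDerivAt.congr_deriv hd ?_
    simp only [hφ', id]
    field_simp
    ring
  have hφ'c : ContinuousOn φ' (Set.uIcc α 1) := by
    apply ContinuousOn.neg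
    apply ContinuousOn.div continuousOn_const
    · exact (ContinuousOn.sub continuousOn_id continuousOn_const).pow 2
    · intro v hv; exact pow_ne_zero _ (hvu v hv).ne'
  have himg : ∀ v ∈ Set.uIcc α 1, φ v ∈ Set.Icc (gaux α u) 1 := by
    intro v hv
    have h1 : 0 < v - u := hvu v hv
    rw [uIcc_of_le hα1.le] at hv
    constructor
    · exact div_le_div_of_nonneg_left hau.le h1 (by linarith [hv.2])
    · rw [div_le_one h1]; linarith [hv.1]
  have hhc : ContinuousOn h (φ '' Set.uIcc α 1) := by
    have : ContinuousOn h (Set.Icc (gaux α u) 1) := by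
      apply ContinuousOn.neg
      apply ContinuousOn.mul continuousOn_const
      apply ContinuousOn.div
      · exact hf.mono (Icc_subset_Icc hg0.le le_rfl)
      · exact continuousOn_pow 3
      · intro x hx; exact pow_ne_zero _ (lt_of_lt_of_le hg0 hx.1).ne'
    exact this.mono (Set.image_subset_iff.mpr himg)
  have hcongr : (∫ v in α..(1:ℝ), (v - u) * f ((α - u) / (v - u)))
      = ∫ v in α..(1:ℝ), φ' v • (h ∘ φ) v := by
    apply intervalIntegral.integral_congr
    intro v hv
    have h1 : 0 < v - u := hvu v hv
    simp only [hφ, hφ', hh, Function.comp, smul_eq_mul]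
    have h3 : ((α - u) / (v - u)) ^ 3 = (α - u) ^ 3 / (v - u) ^ 3 := div_pow _ _ _
    rw [h3]
    field_simp
  rw [hcongr, intervalIntegral.integral_comp_smul_deriv' hderiv hφ'c hhc]
  have hφα : φ α = 1 := div_self hau.ne'
  have hφ1 : φ 1 = gaux α u := rfl
  rw [hφα, hφ1, intervalIntegral.integral_symm]
  simp only [hh]
  rw [intervalIntegral.integral_neg, intervalIntegral.integral_const_mul]
  simp [Gaux]

lemma aux_ftc {f : ℝ → ℝ} (hf : ContinuousOn f (Set.Icc (0:ℝ) 1))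
    {α : ℝ} (hα1 : α < 1) {β : ℝ} (hβ : β ∈ Set.Ioo (0:ℝ) α) :
    (∫ u in (0:ℝ)..β, (α - u) ^ 2 * Gaux f (gaux α u))
      = (-((α - β) ^ 3 / 3) * Gaux f (gaux α β) + α ^ 3 / 3 * Gaux f α)
        + (1 - α) / 3 * ∫ s in (0:ℝ)..β, (1 - s) * f (gaux α s) := by
  obtain ⟨hβ0, hβα⟩ := hβ
  have huIcc : Set.uIcc (0:ℝ) β = Set.Icc 0 β := uIcc_of_le hβ0.le
  have hmem : ∀ u ∈ Set.Icc (0:ℝ) β, gaux α u ∈ Set.Ioo (0:ℝ) 1 := by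
    intro u hu
    have h1 : 0 < α - u := by linarith [hu.2]
    have h2 : 0 < 1 - u := by linarith [hu.2]
    constructor
    · exact div_pos h1 h2
    · rw [gaux, div_lt_one h2]; linarith [hu.1]
  set D : ℝ → ℝ := fun u =>
    (α - u) ^ 2 * Gaux f (gaux α u) - (1 - α) / 3 * ((1 - u) * f (gaux α u)) with hD
  set F : ℝ → ℝ := fun u => -((α - u) ^ 3 / 3) * Gaux f (gaux α u) with hF
  have hder : ∀ u ∈ Set.uIcc (0:ℝ) β, HasDerivAt F (D u) u := by
    intro u hu
    rw [huIcc] at hu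
    have hgu := hmem u hu
    have hu1 : u ≠ 1 := by
      intro h; rw [h] at hu; linarith [hu.2]
    have hau : α - u ≠ 0 := by
      have : u < α := lt_of_le_of_lt hu.2 hβα; linarith
    have h1u : (1:ℝ) - u ≠ 0 := sub_ne_zero.mpr (Ne.symm hu1)
    have hcomp := (aux_hasDerivAt_G hf hgu).comp u (aux_hasDerivAt_g hu1)
    have hpoly : HasDerivAt (fun u : ℝ => -((α - u) ^ 3 / 3)) ((α - u) ^ 2) u := by
      have hp := ((((hasDerivAt_const u α).sub (hasDerivAt_id u)).pow 3).div_const 3).neg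
      refine HasDerivAt.congr_deriv hp ?_
      simp
      ring
    have hprod := hpoly.mul hcomp
    simp only [Function.comp] at hprod
    refine HasDerivAt.congr_deriv hprod ?_
    have hgp : gaux α u ^ 3 = (α - u) ^ 3 / (1 - u) ^ 3 := div_pow _ _ _
    simp only [hD, hgp]
    field_simp
    ring
  have hcont : ContinuousOn D (Set.uIcc (0:ℝ) β) := by
    rw [huIcc]
    intro u hu
    have hgu := hmem u hu
    have hu1 : u ≠ 1 := by
      intro h; rw [h] at hu; linarith [hu.2]
    have hgc : ContinuousAt (gaux α) u := (aux_hasDerivAt_g hu1).continuousAt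
    have hGc : ContinuousAt (Gaux f) (gaux α u) :=
      (aux_hasDerivAt_G hf hgu).continuousAt
    have hfc : ContinuousAt f (gaux α u) := hf.continuousAt (Icc_mem_nhds hgu.1 hgu.2)
    exact ContinuousAt.continuousWithinAt
      ((((continuousAt_const.sub continuousAt_id).pow 2).mul (hGc.comp hgc)).sub
        (continuousAt_const.mul
          ((continuousAt_const.sub continuousAt_id).mul (hfc.comp hgc))))
  have hint : IntervalIntegrable D volume 0 β := hcont.intervalIntegrable
  have h0 : (∫ u in (0:ℝ)..β, D u) = F β - F 0 :=
    intervalIntegral.integral_eq_sub_of_hasDerivAt hder hint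
  have hr : IntervalIntegrable (fun u => (1 - α) / 3 * ((1 - u) * f (gaux α u)))
      volume 0 β := by
    apply ContinuousOn.intervalIntegrable
    rw [huIcc]
    intro u hu
    have hgu := hmem u hu
    have hu1 : u ≠ 1 := by
      intro h; rw [h] at hu; linarith [hu.2]
    have hgc : ContinuousAt (gaux α) u := (aux_hasDerivAt_g hu1).continuousAt
    have hfc : ContinuousAt f (gaux α u) := hf.continuousAt (Icc_mem_nhds hgu.1 hgu.2)
    exact ContinuousAt.continuousWithinAt
      (continuousAt_const.mul
        ((continuousAt_const.sub continuousAt_id).mul (hfc.comp hgc)))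
  have hsplit : (∫ u in (0:ℝ)..β, (α - u) ^ 2 * Gaux f (gaux α u))
      = (∫ u in (0:ℝ)..β, D u)
        + ∫ u in (0:ℝ)..β, (1 - α) / 3 * ((1 - u) * f (gaux α u)) := by
    rw [← intervalIntegral.integral_add hint hr]
    apply intervalIntegral.integral_congr
    intro u hu
    simp only [hD]
    ring
  rw [hsplit, h0, intervalIntegral.integral_const_mul]
  have hg0 : gaux α 0 = α := by simp [gaux]
  simp only [hF, hg0]
  ring

lemma aux_int_cube {M y : ℝ} (hy : 0 < y) (hy1 : y ≤ 1) :
    (∫ t in y..(1:ℝ), M / t ^ 3) = M / (2 * y ^ 2) - M / 2 := by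
  have hder : ∀ t ∈ Set.uIcc y 1, HasDerivAt (fun t : ℝ => -(M / 2) * (t ^ 2)⁻¹)
      (M / t ^ 3) t := by
    intro t ht
    rw [uIcc_of_le hy1] at ht
    have ht0 : 0 < t := lt_of_lt_of_le hy ht.1
    have h2 : HasDerivAt (fun t : ℝ => t ^ 2) (2 * t) t := by
      simpa using hasDerivAt_pow 2 t
    have hinv := (h2.inv (pow_ne_zero 2 ht0.ne')).const_mul (-(M / 2))
    refine HasDerivAt.congr_deriv hinv ?_
    field_simp
  have hint : IntervalIntegrable (fun t => M / t ^ 3) volume y 1 := by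
    apply ContinuousOn.intervalIntegrable
    rw [uIcc_of_le hy1]
    exact ContinuousOn.div continuousOn_const (continuousOn_pow 3)
      (fun t ht => pow_ne_zero _ (lt_of_lt_of_le hy ht.1).ne')
  rw [intervalIntegral.integral_eq_sub_of_hasDerivAt hder hint]
  have hy2 : y ^ 2 ≠ 0 := pow_ne_zero _ hy.ne'
  field_simp
  ring

lemma aux_G_bound {f : ℝ → ℝ} {M : ℝ} (hM : ∀ x ∈ Set.Icc (0:ℝ) 1, |f x| ≤ M)
    {y : ℝ} (hy : 0 < y) (hy1 : y ≤ 1) : |Gaux f y| ≤ M / (2 * y ^ 2) := by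
  have hM0 : 0 ≤ M := le_trans (abs_nonneg _) (hM 0 ⟨le_rfl, zero_le_one⟩)
  have hae : ∀ᵐ t ∂(volume.restrict (Set.uIoc y 1)), ‖f t / t ^ 3‖ ≤ M / t ^ 3 := by
    rw [uIoc_of_le hy1]
    refine (ae_restrict_iff' measurableSet_Ioc).mpr (Filter.Eventually.of_forall ?_)
    intro t ht
    have ht0 : 0 < t := hy.trans ht.1
    have htp : 0 < t ^ 3 := pow_pos ht0 3
    rw [Real.norm_eq_abs, abs_div, abs_of_pos htp]
    exact div_le_div_of_nonneg_right (hM t ⟨ht0.le, ht.2⟩) htp.le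
  have hint : IntervalIntegrable (fun t => M / t ^ 3) volume y 1 := by
    apply ContinuousOn.intervalIntegrable
    rw [uIcc_of_le hy1]
    exact ContinuousOn.div continuousOn_const (continuousOn_pow 3)
      (fun t ht => pow_ne_zero _ (lt_of_lt_of_le hy ht.1).ne')
  have h1 := intervalIntegral.norm_integral_le_abs_of_norm_le hae hint
  rw [aux_int_cube hy hy1] at h1
  have hnn : (0:ℝ) ≤ M / (2 * y ^ 2) - M / 2 := by
    have hy2 : 0 < 2 * y ^ 2 := by positivity
    have hle : 2 * y ^ 2 ≤ 2 := by nlinarith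
    have := div_le_div_of_nonneg_left hM0 hy2 hle
    linarith
  rw [abs_of_nonneg hnn] at h1
  have : |Gaux f y| ≤ M / (2 * y ^ 2) - M / 2 := h1
  linarith

lemma aux_sub {f : ℝ → ℝ} (hf : ContinuousOn f (Set.Icc (0:ℝ) 1))
    {α : ℝ} (hα0 : 0 < α) (hα1 : α < 1) :
    (∫ s in (0:ℝ)..α, (1 - s) * f (gaux α s))
      = (1 - α) ^ 2 * ∫ x in (0:ℝ)..α, f x / (1 - x) ^ 3 := by
  have huIcc : Set.uIcc (0:ℝ) α = Set.Icc 0 α := uIcc_of_le hα0.le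
  set φ' : ℝ → ℝ := fun s => (α - 1) / (1 - s) ^ 2 with hφ'
  set h : ℝ → ℝ := fun x => -((1 - α) ^ 2 * (f x / (1 - x) ^ 3)) with hh
  have hs1 : ∀ s ∈ Set.Icc (0:ℝ) α, (0:ℝ) < 1 - s := by
    intro s hs; have := hs.2; linarith
  have hder : ∀ s ∈ Set.uIcc (0:ℝ) α, HasDerivAt (gaux α) (φ' s) s := by
    intro s hs
    rw [huIcc] at hs
    exact aux_hasDerivAt_g (by have := hs.2; intro hc; rw [hc] at this; linarith)
  have hφ'c : ContinuousOn φ' (Set.uIcc (0:ℝ) α) := by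
    rw [huIcc]
    apply ContinuousOn.div continuousOn_const
    · exact (ContinuousOn.sub continuousOn_const continuousOn_id).pow 2
    · intro s hs; exact pow_ne_zero _ (hs1 s hs).ne'
  have himg : ∀ s ∈ Set.uIcc (0:ℝ) α, gaux α s ∈ Set.Icc (0:ℝ) α := by
    intro s hs
    rw [huIcc] at hs
    have h2 := hs1 s hs
    constructor
    · apply div_nonneg _ h2.le; linarith [hs.2]
    · rw [gaux, div_le_iff₀ h2]; nlinarith [hs.1, hα1.le]
  have hhc : ContinuousOn h (gaux α '' Set.uIcc (0:ℝ) α) := by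
    have : ContinuousOn h (Set.Icc (0:ℝ) α) := by
      apply ContinuousOn.neg
      apply ContinuousOn.mul continuousOn_const
      apply ContinuousOn.div (hf.mono (Icc_subset_Icc le_rfl hα1.le))
      · exact (ContinuousOn.sub continuousOn_const continuousOn_id).pow 3
      · intro x hx; exact pow_ne_zero _ (hs1 x hx).ne'
    exact this.mono (Set.image_subset_iff.mpr himg)
  have hcongr : (∫ s in (0:ℝ)..α, (1 - s) * f (gaux α s))
      = ∫ s in (0:ℝ)..α, φ' s • (h ∘ gaux α) s := by
    apply intervalIntegral.integral_congr
    intro s hs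
    rw [huIcc] at hs
    have h2 := hs1 s hs
    have hgs : 1 - gaux α s = (1 - α) / (1 - s) := by
      rw [gaux]; field_simp; ring
    simp only [Function.comp, smul_eq_mul, hφ', hh, hgs]
    rw [div_pow]
    have hα1' : (1:ℝ) - α ≠ 0 := by linarith
    field_simp
    ring
  rw [hcongr, intervalIntegral.integral_comp_smul_deriv' hder hφ'c hhc]
  have hg0 : gaux α 0 = α := by simp [gaux]
  have hgα : gaux α α = 0 := by simp [gaux]
  rw [hg0, hgα, intervalIntegral.integral_symm]
  simp only [hh]
  rw [intervalIntegral.integral_neg, intervalIntegral.integral_const_mul]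
  ring

theorem middle_segment_change_of_variables (f : ℝ → ℝ)
    (hf : ContinuousOn f (Set.Icc (0:ℝ) 1))
    (α : ℝ) (hα : α ∈ Set.Ioo (0:ℝ) 1) :
    (∫ u in (0:ℝ)..α, ∫ v in α..(1:ℝ), (v - u) * f ((α - u) / (v - u)))
      = ((1 - α) ^ 3 / 3) * (∫ x in (0:ℝ)..α, f x / (1 - x) ^ 3)
        + (α ^ 3 / 3) * (∫ x in α..(1:ℝ), f x / x ^ 3) := by
  obtain ⟨hα0, hα1⟩ := hα
  obtain ⟨M, hM⟩ : ∃ M, ∀ x ∈ Set.Icc (0:ℝ) 1, |f x| ≤ M := by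
    obtain ⟨M, hM⟩ := isCompact_Icc.exists_bound_of_continuousOn hf
    exact ⟨M, fun x hx => by simpa using hM x hx⟩
  have hM0 : (0:ℝ) ≤ M := le_trans (abs_nonneg _) (hM 0 ⟨le_rfl, zero_le_one⟩)
  set Q : ℝ → ℝ := fun u => ∫ v in α..(1:ℝ), (v - u) * f ((α - u) / (v - u)) with hQdef
  set L : Filter ℝ := nhdsWithin α (Set.Ioo (0:ℝ) α) with hLdef
  have hLne : L.NeBot := by
    apply mem_closure_iff_nhdsWithin_neBot.mp
    rw [closure_Ioo hα0.ne]
    exact ⟨hα0.le, le_rfl⟩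
  have hEv : ∀ᶠ β in L, β ∈ Set.Ioo (0:ℝ) α := eventually_mem_nhdsWithin
  -- boundedness of Q
  have hQb : ∀ u ∈ Set.Icc (0:ℝ) α, |Q u| ≤ M := by
    intro u hu
    have hbd : ∀ v ∈ Set.uIoc α 1, ‖(v - u) * f ((α - u) / (v - u))‖ ≤ M := by
      intro v hv
      rw [Set.uIoc_of_le hα1.le] at hv
      have hvu : 0 < v - u := by
        have := hu.2; have := hv.1; linarith
      have hr : (α - u) / (v - u) ∈ Set.Icc (0:ℝ) 1 := by
        constructor
        · apply div_nonneg _ hvu.le; linarith [hu.2]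
        · rw [div_le_one hvu]; linarith [hv.1]
      rw [Real.norm_eq_abs, abs_mul, abs_of_pos hvu]
      calc (v - u) * |f ((α - u) / (v - u))| ≤ 1 * M := by
            apply mul_le_mul _ (hM _ hr) (abs_nonneg _) zero_le_one
            have := hv.2; have := hu.1; linarith
        _ = M := one_mul M
    have h1 := intervalIntegral.norm_integral_le_of_norm_le_const hbd
    rw [Real.norm_eq_abs] at h1
    calc |Q u| ≤ M * |1 - α| := h1
      _ ≤ M * 1 := by
          apply mul_le_mul_of_nonneg_left _ hM0
          rw [abs_of_pos (by linarith : (0:ℝ) < 1 - α)]; linarith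
      _ = M := mul_one M
  -- continuity of Q on Ioo
  have hQc : ContinuousOn Q (Set.Ioo (0:ℝ) α) := by
    have heq : Set.EqOn Q (fun u => (α - u) ^ 2 * Gaux f (gaux α u)) (Set.Ioo (0:ℝ) α) :=
      fun u hu => aux_inner hf hα1 ⟨hu.1.le, hu.2⟩
    apply ContinuousOn.congr _ heq
    intro u hu
    have hgu : gaux α u ∈ Set.Ioo (0:ℝ) 1 := by
      have h1 : 0 < α - u := by linarith [hu.2]
      have h2 : 0 < 1 - u := by linarith [hu.2]
      refine ⟨div_pos h1 h2, ?_⟩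
      rw [gaux, div_lt_one h2]; linarith
    have hu1 : u ≠ 1 := by intro h; rw [h] at hu; linarith [hu.2]
    exact ContinuousAt.continuousWithinAt
      (((continuousAt_const.sub continuousAt_id).pow 2).mul
        ((aux_hasDerivAt_G hf hgu).continuousAt.comp (aux_hasDerivAt_g hu1).continuousAt))
  -- integrability of Q on Icc 0 α
  have hQIoo : IntegrableOn Q (Set.Ioo (0:ℝ) α) volume := by
    apply Integrable.mono' (g := fun _ => M)
      (integrableOn_const measure_Ioo_lt_top.ne)
      (hQc.aestronglyMeasurable measurableSet_Ioo)
    refine (ae_restrict_iff' measurableSet_Ioo).mpr (Filter.Eventually.of_forall ?_)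
    intro u hu
    rw [Real.norm_eq_abs]
    exact hQb u (Set.Ioo_subset_Icc_self hu)
  have hQIcc : IntegrableOn Q (Set.Icc (0:ℝ) α) volume :=
    hQIoo.congr_set_ae Ioo_ae_eq_Icc.symm
  -- limit of primitive of Q
  have hW : Filter.Tendsto (fun β => ∫ u in (0:ℝ)..β, Q u) L
      (𝓝 (∫ u in (0:ℝ)..α, Q u)) := by
    have hc := intervalIntegral.continuousOn_primitive_interval (a := (0:ℝ)) (b := α)
      (μ := volume) (f := Q) (by rwa [Set.uIcc_of_le hα0.le])
    have hcw := hc α (by rw [Set.uIcc_of_le hα0.le]; exact ⟨hα0.le, le_rfl⟩)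
    exact hcw.mono_left (nhdsWithin_mono α
      (by rw [Set.uIcc_of_le hα0.le]; exact Set.Ioo_subset_Icc_self))
  -- limit of boundary term
  have hT1 : Filter.Tendsto (fun β => -((α - β) ^ 3 / 3) * Gaux f (gaux α β)) L (𝓝 0) := by
    apply squeeze_zero_norm' (a := fun β => M * (α - β) / 6)
    · filter_upwards [hEv] with β hβ
      have hab : 0 < α - β := by linarith [hβ.2]
      have h1b : 0 < 1 - β := by linarith [hβ.2]
      have hgb : gaux α β ∈ Set.Ioo (0:ℝ) 1 := by
        refine ⟨div_pos hab h1b, ?_⟩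
        rw [gaux, div_lt_one h1b]; linarith
      have hGb := aux_G_bound hM hgb.1 hgb.2.le
      have hg2 : gaux α β ^ 2 = (α - β) ^ 2 / (1 - β) ^ 2 := div_pow _ _ _
      rw [Real.norm_eq_abs, abs_mul, abs_neg, abs_of_nonneg (by positivity : (0:ℝ) ≤ (α - β) ^ 3 / 3)]
      calc (α - β) ^ 3 / 3 * |Gaux f (gaux α β)|
          ≤ (α - β) ^ 3 / 3 * (M / (2 * gaux α β ^ 2)) := by
            apply mul_le_mul_of_nonneg_left hGb (by positivity)
        _ = M * (α - β) * (1 - β) ^ 2 / 6 := by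
            rw [hg2]; field_simp; ring
        _ ≤ M * (α - β) / 6 := by
            nlinarith [mul_nonneg (mul_nonneg hM0 hab.le)
              (mul_nonneg hβ.1.le (by linarith [hβ.2] : (0:ℝ) ≤ 2 - β))]
    · have hcont : Continuous (fun β : ℝ => M * (α - β) / 6) := by continuity
      have := hcont.tendsto α
      simp only [sub_self, mul_zero, zero_div] at this
      exact this.mono_left nhdsWithin_le_nhds
  -- limit of the remaining integral
  have hrc : ContinuousOn (fun s => (1 - s) * f (gaux α s)) (Set.Icc (0:ℝ) α) := by
    have hgc : ContinuousOn (gaux α) (Set.Icc (0:ℝ) α) := by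
      intro s hs
      have hs1 : s ≠ 1 := by intro h; rw [h] at hs; linarith [hs.2]
      exact (aux_hasDerivAt_g hs1).continuousAt.continuousWithinAt
    have hmaps : Set.MapsTo (gaux α) (Set.Icc (0:ℝ) α) (Set.Icc (0:ℝ) 1) := by
      intro s hs
      have h2 : 0 < 1 - s := by linarith [hs.2]
      constructor
      · apply div_nonneg _ h2.le; linarith [hs.2]
      · rw [gaux, div_le_one h2]; linarith [hs.1]
    exact (ContinuousOn.sub continuousOn_const continuousOn_id).mul (hf.comp hgc hmaps)
  have hT3 : Filter.Tendsto (fun β => ∫ s in (0:ℝ)..β, (1 - s) * f (gaux α s)) L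
      (𝓝 (∫ s in (0:ℝ)..α, (1 - s) * f (gaux α s))) := by
    have hir : IntegrableOn (fun s => (1 - s) * f (gaux α s)) (Set.uIcc (0:ℝ) α) volume := by
      rw [Set.uIcc_of_le hα0.le]
      exact hrc.integrableOn_Icc
    have hc := intervalIntegral.continuousOn_primitive_interval (a := (0:ℝ)) (b := α)
      (μ := volume) hir
    have hcw := hc α (by rw [Set.uIcc_of_le hα0.le]; exact ⟨hα0.le, le_rfl⟩)
    exact hcw.mono_left (nhdsWithin_mono α
      (by rw [Set.uIcc_of_le hα0.le]; exact Set.Ioo_subset_Icc_self))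
  -- the eventual identity
  have hEq : ∀ᶠ β in L, (∫ u in (0:ℝ)..β, Q u)
      = (-((α - β) ^ 3 / 3) * Gaux f (gaux α β) + α ^ 3 / 3 * Gaux f α)
        + (1 - α) / 3 * ∫ s in (0:ℝ)..β, (1 - s) * f (gaux α s) := by
    filter_upwards [hEv] with β hβ
    have h1 : (∫ u in (0:ℝ)..β, Q u) = ∫ u in (0:ℝ)..β, (α - u) ^ 2 * Gaux f (gaux α u) := by
      apply intervalIntegral.integral_congr
      intro u hu
      rw [Set.uIcc_of_le hβ.1.le] at hu
      exact aux_inner hf hα1 ⟨hu.1, lt_of_le_of_lt hu.2 hβ.2⟩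
    rw [h1, aux_ftc hf hα1 hβ]
  have hRlim : Filter.Tendsto (fun β =>
      (-((α - β) ^ 3 / 3) * Gaux f (gaux α β) + α ^ 3 / 3 * Gaux f α)
        + (1 - α) / 3 * ∫ s in (0:ℝ)..β, (1 - s) * f (gaux α s)) L
      (𝓝 ((0 + α ^ 3 / 3 * Gaux f α)
        + (1 - α) / 3 * ∫ s in (0:ℝ)..α, (1 - s) * f (gaux α s))) :=
    (hT1.add tendsto_const_nhds).add (hT3.const_mul ((1 - α) / 3))
  have key := tendsto_nhds_unique (hW.congr' hEq) hRlim
  rw [aux_sub hf hα0 hα1] at key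
  calc (∫ u in (0:ℝ)..α, Q u)
      = (0 + α ^ 3 / 3 * Gaux f α)
        + (1 - α) / 3 * ((1 - α) ^ 2 * ∫ x in (0:ℝ)..α, f x / (1 - x) ^ 3) := key
    _ = ((1 - α) ^ 3 / 3) * (∫ x in (0:ℝ)..α, f x / (1 - x) ^ 3)
        + (α ^ 3 / 3) * (∫ x in α..(1:ℝ), f x / x ^ 3) := by
        simp only [Gaux]
        ring
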